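/- For every b > 1, every α ∈ (0,1), and every integer N ≥ 2, one has (1 - b^(1-N))/(N-1) ≤ (b-1)^α · ((1-α)/(N+α-1))^(1-α). -/

import Mathlib

open MeasureTheory Real intervalIntegral

/-- For every `b > 1`, every `α ∈ (0,1)` and every integer `N ≥ 2`,
`(1 - b^(1-N))/(N-1) ≤ (b-1)^α · ((1-α)/(N+α-1))^(1-α)`. -/
theorem stmt1 (b α : ℝ) (N : ℕ) (hb : 1 < b) (hα : α ∈ Set.Ioo (0:ℝ) 1) (hN : 2 ≤ N) :
    (1 - b ^ (1 - (N : ℝ))) / ((N : ℝ) - 1) ≤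
      (b - 1) ^ α * ((1 - α) / ((N : ℝ) + α - 1)) ^ (1 - α) := by
  obtain ⟨hα0, hα1⟩ := hα
  have hb0 : (0:ℝ) < b - 1 := by linarith
  have hNR : (2:ℝ) ≤ (N:ℝ) := by exact_mod_cast hN
  have h1α : (0:ℝ) < 1 - α := by linarith
  have hden : (0:ℝ) < (N:ℝ) + α - 1 := by linarith
  set μ := volume.restrict (Set.Ioc (1:ℝ) b) with hμ
  haveI : IsFiniteMeasure μ := ⟨by
    rw [hμ, Measure.restrict_apply_univ, Real.volume_Ioc]
    exact ENNReal.ofReal_lt_top⟩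
  set p := 1/α with hp
  set q := 1/(1-α) with hq
  have hpq : p.HolderConjugate q := Real.holderConjugate_iff.mpr ⟨by
      rw [hp]; exact one_lt_one_div hα0 hα1, by
      rw [hp, hq]; field_simp; ring⟩
  have hgm : Measurable fun t : ℝ => t ^ (-(N:ℝ)) :=
    measurable_id.pow_const (-(N:ℝ))
  have hf : MemLp (fun _ : ℝ => (1:ℝ)) (ENNReal.ofReal p) μ := memLp_const 1
  have hg : MemLp (fun t : ℝ => t ^ (-(N:ℝ))) (ENNReal.ofReal q) μ := by
    refine MemLp.of_bound hgm.aestronglyMeasurable 1 ?_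
    filter_upwards [ae_restrict_mem measurableSet_Ioc] with t ht
    have ht1 : (1:ℝ) ≤ t := ht.1.le
    rw [Real.norm_of_nonneg (Real.rpow_nonneg (by linarith) _)]
    exact Real.rpow_le_one_of_one_le_of_nonpos ht1 (neg_nonpos.mpr (Nat.cast_nonneg N))
  have hgnn : 0 ≤ᵐ[μ] fun t : ℝ => t ^ (-(N:ℝ)) := by
    filter_upwards [ae_restrict_mem measurableSet_Ioc] with t ht
    exact Real.rpow_nonneg (by linarith [ht.1]) _
  have key := integral_mul_le_Lp_mul_Lq_of_nonneg hpq
    (Filter.Eventually.of_forall fun _ => zero_le_one) hgnn hf hg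
  simp only [one_mul] at key
  -- compute the left integral
  have e1 : ∫ t, t ^ (-(N:ℝ)) ∂μ = (1 - b ^ (1 - (N:ℝ))) / ((N:ℝ) - 1) := by
    rw [hμ, ← integral_of_le hb.le, integral_rpow
      (Or.inr ⟨fun h => by rw [neg_inj] at h; linarith,
        by rw [Set.uIcc_of_le hb.le]; rintro ⟨h0, _⟩; linarith⟩)]
    rw [Real.one_rpow]
    have hne : (N:ℝ) - 1 ≠ 0 := by linarith
    have hne2 : -(N:ℝ) + 1 ≠ 0 := by intro h; apply hne; linarith
    field_simp
    ring_nf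
  -- compute the first factor
  have e2 : ∫ t, (1:ℝ) ^ p ∂μ = b - 1 := by
    simp [hμ, Real.one_rpow, Measure.restrict_apply_univ, Real.volume_Ioc,
      ENNReal.toReal_ofReal hb0.le, hb.le]
  -- bound the second factor
  have e3 : ∫ t, (t ^ (-(N:ℝ))) ^ q ∂μ ≤ (1 - α) / ((N:ℝ) + α - 1) := by
    have hcongr : ∫ t, (t ^ (-(N:ℝ))) ^ q ∂μ = ∫ t, t ^ (-(N:ℝ) * q) ∂μ := by
      rw [hμ]
      refine setIntegral_congr_fun measurableSet_Ioc fun t ht => ?_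
      rw [← Real.rpow_mul (by linarith [ht.1])]
    rw [hcongr, hμ, ← integral_of_le hb.le]
    have hrq : -(N:ℝ) * q + 1 < 0 := by
      rw [hq]
      have hq1 : (1:ℝ) ≤ 1/(1-α) := by rw [le_div_iff₀ h1α]; linarith
      nlinarith
    rw [integral_rpow (Or.inr ⟨by intro h; rw [h] at hrq; norm_num at hrq,
      by rw [Set.uIcc_of_le hb.le]; rintro ⟨h0, _⟩; linarith⟩)]
    rw [Real.one_rpow]
    have hbp : 0 < b ^ (-(N:ℝ) * q + 1) := Real.rpow_pos_of_pos (by linarith) _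
    have h2 : (b ^ (-(N:ℝ) * q + 1) - 1) / (-(N:ℝ) * q + 1)
        = (1 - b ^ (-(N:ℝ) * q + 1)) / (-(-(N:ℝ) * q + 1)) := by
      rw [div_eq_div_iff (by linarith) (by linarith)]; ring
    rw [h2]
    have hval : -(-(N:ℝ) * q + 1) = ((N:ℝ) + α - 1) / (1 - α) := by
      rw [hq]; field_simp; ring
    rw [hval]
    rw [div_le_div_iff₀ (by positivity) (by positivity)]
    have hb1 : b ^ (-(N:ℝ) * q + 1) ≤ 1 :=
      Real.rpow_le_one_of_one_le_of_nonpos hb.le hrq.le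
    have h1 : (1 - b ^ (-(N:ℝ) * q + 1)) ≤ 1 := by linarith
    calc (1 - b ^ (-(N:ℝ) * q + 1)) * ((N:ℝ) + α - 1)
        ≤ 1 * ((N:ℝ) + α - 1) := by nlinarith
      _ = (1 - α) * (((N:ℝ) + α - 1) / (1 - α)) := by field_simp
  -- nonnegativity of the second integral
  have hI2 : 0 ≤ ∫ t, (t ^ (-(N:ℝ))) ^ q ∂μ := by
    apply MeasureTheory.integral_nonneg_of_ae
    filter_upwards [ae_restrict_mem measurableSet_Ioc] with t ht
    exact Real.rpow_nonneg (Real.rpow_nonneg (by linarith [ht.1]) _) _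
  rw [e1, e2] at key
  have h1p : 1/p = α := by rw [hp]; field_simp
  have h1q : 1/q = 1 - α := by rw [hq]; field_simp
  rw [h1p, h1q] at key
  exact key.trans (mul_le_mul_of_nonneg_left
    (Real.rpow_le_rpow hI2 e3 (by linarith)) (Real.rpow_nonneg hb0.le _))
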